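/- arXiv:1506.06538 — 3 statements merged into one kernel-verified Lean document; each statement's English description precedes it below -/
import Mathlib

section
/- For the sequence a with a_0 = 0, a_1 = 1, a_n = min{k < n : k + a_k ≥ n} (n ≥ 2): for every i ≥ 1, a_{i + a_i} = i. -/
/-- The sequence defined by `a 0 = 0`, `a 1 = 1`, and for `n ≥ 2`,
`a n = min { k < n : m * k + a k ≥ n }` (for `m = 1` this is the sequence `a` of the paper). -/
noncomputable def jseq (m : ℕ) (n : ℕ) : ℕ :=
  Nat.strongRecOn n (fun n ih =>
    if n = 0 then 0
    else if n = 1 then 1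
    else sInf {k : ℕ | ∃ h : k < n, n ≤ m * k + ih k h})

theorem strongRecOn_eq (n : ℕ) (f : (n:ℕ) → ((m:ℕ) → m < n → ℕ) → ℕ) :
    Nat.strongRecOn n f = f n (fun m _ => Nat.strongRecOn m f) := by
  show WellFounded.fix _ _ _ = _
  rw [WellFounded.fix_eq]
  rfl

theorem jseq_def (m n : ℕ) : jseq m n =
    if n = 0 then 0 else if n = 1 then 1
    else sInf {k : ℕ | k < n ∧ n ≤ m * k + jseq m k} := by
  rw [jseq, strongRecOn_eq]
  simp only [exists_prop]
  rfl

theorem jseq_zero (m : ℕ) : jseq m 0 = 0 := by rw [jseq_def]; simp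
theorem jseq_one (m : ℕ) : jseq m 1 = 1 := by rw [jseq_def]; simp

theorem jseq_two_le (n : ℕ) (hn : 2 ≤ n) :
    jseq 1 n = sInf {k : ℕ | k < n ∧ n ≤ k + jseq 1 k} := by
  rw [jseq_def]
  have h0 : n ≠ 0 := by omega
  have h1 : n ≠ 1 := by omega
  simp [h0, h1]

theorem jseq_pos : ∀ n, 1 ≤ n → 1 ≤ jseq 1 n := by
  intro n
  induction n using Nat.strong_induction_on with
  | _ n ih =>
    intro hn
    rcases eq_or_lt_of_le hn with h1 | h2
    · rw [← h1, jseq_one]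
    · have hn2 : 2 ≤ n := h2
      have hne : ((n - 1 : ℕ) ∈ {k : ℕ | k < n ∧ n ≤ k + jseq 1 k}) := by
        have := ih (n - 1) (by omega) (by omega)
        constructor <;> omega
      have hmem := Nat.sInf_mem ⟨n - 1, hne⟩
      rw [jseq_two_le n hn2]
      rcases Nat.eq_zero_or_pos (sInf {k : ℕ | k < n ∧ n ≤ k + jseq 1 k}) with h | h
      · exfalso
        rw [h] at hmem
        have := hmem.2
        rw [jseq_zero] at this
        omega
      · exact h

theorem jseq_mem (n : ℕ) (hn : 2 ≤ n) :
    jseq 1 n < n ∧ n ≤ jseq 1 n + jseq 1 (jseq 1 n) := by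
  have hne : ((n - 1 : ℕ) ∈ {k : ℕ | k < n ∧ n ≤ k + jseq 1 k}) := by
    have := jseq_pos (n - 1) (by omega)
    constructor <;> omega
  have hmem := Nat.sInf_mem ⟨n - 1, hne⟩
  rw [jseq_two_le n hn]
  exact hmem

theorem jseq_mono : Monotone (jseq 1) := by
  apply monotone_nat_of_le_succ
  intro n
  rcases n with _ | _ | n
  · simp [jseq_zero]
  · rw [jseq_one]
    exact jseq_pos 2 (by omega)
  · set N := n + 2 with hNdef
    have hN : 2 ≤ N := by omega
    obtain ⟨h1, h2⟩ := jseq_mem (N+1) (by omega)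
    rcases Nat.lt_or_ge (jseq 1 (N+1)) N with hlt | hge
    · rw [jseq_two_le N hN]
      exact Nat.sInf_le ⟨hlt, by omega⟩
    · have := (jseq_mem N hN).1
      omega

/-- For every `i ≥ 1`, `a (i + a i) = i`. -/
theorem jseq_add_self (i : ℕ) (hi : 1 ≤ i) : jseq 1 (i + jseq 1 i) = i := by
  have hj : 1 ≤ jseq 1 i := jseq_pos i hi
  set n := i + jseq 1 i with hn
  have hn2 : 2 ≤ n := by omega
  have hi_mem : i ∈ {k : ℕ | k < n ∧ n ≤ k + jseq 1 k} := ⟨by omega, le_refl _⟩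
  rw [jseq_two_le n hn2]
  have hle : sInf {k : ℕ | k < n ∧ n ≤ k + jseq 1 k} ≤ i := Nat.sInf_le hi_mem
  obtain ⟨hs1, hs2⟩ := Nat.sInf_mem ⟨i, hi_mem⟩
  set s := sInf {k : ℕ | k < n ∧ n ≤ k + jseq 1 k}
  rcases Nat.lt_or_ge s i with hlt | hge
  · have := jseq_mono hlt.le
    omega
  · omega
end

section
/- For the finite Jaco graph J_ℓ(mx) with c = 0: if ℓ ≤ m + 1 then its underlying graph is the complete graph on ℓ vertices, and hence the number of arcs equals ℓ(ℓ−1)/2. -/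
/-- In-degree of vertex `j` in the infinite linear Jaco graph for `f x = m * x + c`:
`d⁻(v_j)` is the number of tails `1 ≤ i < j` with `f i + i - d⁻(v_i) ≥ j`
(stated subtraction-free as `j + d⁻(v_i) ≤ m * i + c + i`). -/
noncomputable def jacoIndeg (m c : ℕ) (j : ℕ) : ℕ :=
  Nat.strongRecOn j (fun j ih =>
    ((Finset.Ico 1 j).attach.filter (fun i =>
      j + ih i.1 (Finset.mem_Ico.mp i.2).2 ≤ m * i.1 + c + i.1)).card)

/-- `(v_i, v_j)` is an arc of the infinite Jaco graph `J_∞(mx + c)` iff `1 ≤ i < j` and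
`f(i) + i - d⁻(v_i) ≥ j`. -/
def JacoArc (m c i j : ℕ) : Prop :=
  1 ≤ i ∧ i < j ∧ j + jacoIndeg m c i ≤ m * i + c + i

noncomputable instance (m c i j : ℕ) : Decidable (JacoArc m c i j) := by
  unfold JacoArc; infer_instance

/-- Out-degree of `v_i` in the infinite Jaco graph `J_∞(mx + c)`. -/
noncomputable def jacoOutdegInf (m c i : ℕ) : ℕ := {j | JacoArc m c i j}.ncard

/-- Out-degree of `v_i` in the finite Jaco graph `J_n(mx + c)`. -/
noncomputable def jacoOutdeg (m c n i : ℕ) : ℕ :=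
  ((Finset.Icc 1 n).filter (fun j => JacoArc m c i j)).card

/-- Total degree of `v_i` in the underlying graph of `J_n(mx + c)`
(for `i ≤ n` the in-degree in `J_n` agrees with that in `J_∞`). -/
noncomputable def jacoDeg (m c n i : ℕ) : ℕ := jacoIndeg m c i + jacoOutdeg m c n i

/-- Number of arcs of the finite Jaco graph `J_n(mx + c)`. -/
noncomputable def jacoArcs (m c n : ℕ) : ℕ :=
  (((Finset.Icc 1 n) ×ˢ (Finset.Icc 1 n)).filter (fun p => JacoArc m c p.1 p.2)).card

lemma jacoIndeg_le (m c j : ℕ) : jacoIndeg m c j ≤ j - 1 := by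
  unfold jacoIndeg Nat.strongRecOn
  rw [WellFounded.fix_eq]
  calc _ ≤ (Finset.Ico 1 j).attach.card := Finset.card_filter_le _ _
  _ = j - 1 := by simp

/-- For `ℓ ≤ m + 1`, the underlying graph of `J_ℓ(mx)` is complete, so it has
`ℓ(ℓ-1)/2` arcs. -/
theorem jaco_arcs_complete (m ℓ : ℕ) (hm : 1 ≤ m) (hℓ : ℓ ≤ m + 1) :
    (∀ i j : ℕ, 1 ≤ i → i < j → j ≤ ℓ → JacoArc m 0 i j) ∧
      jacoArcs m 0 ℓ = ℓ * (ℓ - 1) / 2 := by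
  have harc : ∀ i j : ℕ, 1 ≤ i → i < j → j ≤ ℓ → JacoArc m 0 i j := by
    intro i j hi hij hjl
    refine ⟨hi, hij, ?_⟩
    have h1 : jacoIndeg m 0 i ≤ i - 1 := jacoIndeg_le m 0 i
    have h2 : m ≤ m * i := Nat.le_mul_of_pos_right m hi
    omega
  refine ⟨harc, ?_⟩
  unfold jacoArcs
  have hset : ((Finset.Icc 1 ℓ) ×ˢ (Finset.Icc 1 ℓ)).filter (fun p => JacoArc m 0 p.1 p.2)
      = ((Finset.Icc 1 ℓ) ×ˢ (Finset.Icc 1 ℓ)).filter (fun p => p.1 < p.2) := by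
    apply Finset.filter_congr
    intro p hp
    simp only [Finset.mem_product, Finset.mem_Icc] at hp
    constructor
    · intro h; exact h.2.1
    · intro h; exact harc p.1 p.2 hp.1.1 h hp.2.2
  rw [hset, Finset.card_filter, Finset.sum_product]
  have h1 : ∀ i ∈ Finset.Icc 1 ℓ, (∑ j ∈ Finset.Icc 1 ℓ, if i < j then 1 else 0) = ℓ - i := by
    intro i hi
    simp only [Finset.mem_Icc] at hi
    rw [← Finset.card_filter]
    have h : (Finset.Icc 1 ℓ).filter (fun j => i < j) = Finset.Icc (i+1) ℓ := by
      ext j; simp only [Finset.mem_Icc, Finset.mem_filter]; omega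
    rw [h, Nat.card_Icc]; omega
  rw [Finset.sum_congr rfl h1]
  have h2 : ∑ i ∈ Finset.Icc 1 ℓ, (ℓ - i) = ∑ i ∈ Finset.range ℓ, i := by
    rw [show Finset.Icc 1 ℓ = Finset.Ico 1 (ℓ+1) by rfl, Finset.sum_Ico_eq_sum_range]
    simp only [Nat.add_sub_cancel]
    rw [← Finset.sum_range_reflect (fun i => i) ℓ]
    apply Finset.sum_congr rfl
    intro i hi; simp only [Finset.mem_range] at hi; omega
  rw [h2, Finset.sum_range_id]
end

section
/- For the sequence a with a_0=0, a_1=1, a_n = min{k < n : k + a_k ≥ n}: the number of arcs of the Jaco graph J_n(x) (f(x)=x) equals n(n+1)/2 − Σ_{i=1}^{n} a_i, since d⁺(v_i) = a_i and d⁺(v_i) + d⁻(v_i) = i for each i. -/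
section JacoAux
open Finset

lemma card_filter_attach' (p : ℕ → Prop) [DecidablePred p] (s : Finset ℕ) :
    (s.attach.filter (fun i => p i.1)).card = (s.filter p).card := by
  rw [Finset.filter_attach, Finset.card_map, Finset.card_attach]

lemma jacoIndeg_eq (m c j : ℕ) :
    jacoIndeg m c j =
      ((Finset.Ico 1 j).filter (fun i => j + jacoIndeg m c i ≤ m * i + c + i)).card := by
  have h1 : jacoIndeg m c j = ((Finset.Ico 1 j).attach.filter
      (fun i => j + jacoIndeg m c i.1 ≤ m * i.1 + c + i.1)).card := by
    conv_lhs => rw [jacoIndeg, Nat.strongRecOn]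
    rw [WellFounded.fix_eq]
    rfl
  rw [h1, card_filter_attach' (fun x => j + jacoIndeg m c x ≤ m * x + c + x)]

lemma jseq_eq (m n : ℕ) :
    jseq m n =
      if n = 0 then 0
      else if n = 1 then 1
      else sInf {k : ℕ | ∃ _ : k < n, n ≤ m * k + jseq m k} := by
  conv_lhs => rw [jseq, Nat.strongRecOn]
  rw [WellFounded.fix_eq]
  rfl

-- abbreviation lemmas for m = 1, c = 0
lemma D_eq (j : ℕ) :
    jacoIndeg 1 0 j =
      ((Finset.Ico 1 j).filter (fun i => j + jacoIndeg 1 0 i ≤ 1 * i + 0 + i)).card :=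
  jacoIndeg_eq 1 0 j

lemma D_le (j : ℕ) (hj : 1 ≤ j) : jacoIndeg 1 0 j + 1 ≤ j := by
  have h := D_eq j
  have h2 : ((Finset.Ico 1 j).filter (fun i => j + jacoIndeg 1 0 i ≤ 1 * i + 0 + i)).card
      ≤ (Finset.Ico 1 j).card := Finset.card_filter_le _ _
  rw [Nat.card_Ico] at h2
  omega

lemma D_step (j : ℕ) (hj : 1 ≤ j) : jacoIndeg 1 0 (j + 1) ≤ jacoIndeg 1 0 j + 1 := by
  rw [D_eq (j + 1), D_eq j]
  have hins : Finset.Ico 1 (j + 1) = insert j (Finset.Ico 1 j) := by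
    ext x; simp [Finset.mem_Ico, Finset.mem_insert]; omega
  rw [hins, Finset.filter_insert]
  have hsub : ((Finset.Ico 1 j).filter (fun i => j + 1 + jacoIndeg 1 0 i ≤ 1 * i + 0 + i)).card
      ≤ ((Finset.Ico 1 j).filter (fun i => j + jacoIndeg 1 0 i ≤ 1 * i + 0 + i)).card := by
    apply Finset.card_le_card
    intro x hx
    simp only [Finset.mem_filter] at hx ⊢
    exact ⟨hx.1, by omega⟩
  split
  · calc _ ≤ ((Finset.Ico 1 j).filter (fun i => j + 1 + jacoIndeg 1 0 i ≤ 1 * i + 0 + i)).card + 1 :=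
        Finset.card_insert_le _ _
      _ ≤ _ := by omega
  · omega

/-- `G j = 2j - d⁻(j)` is monotone (on `j ≥ 1`). -/
lemma G_mono (i j : ℕ) (hi : 1 ≤ i) (hij : i ≤ j) :
    2 * i - jacoIndeg 1 0 i ≤ 2 * j - jacoIndeg 1 0 j := by
  induction j, hij using Nat.le_induction with
  | base => exact le_refl _
  | succ k hk ih =>
      have h1 := D_step k (le_trans hi hk)
      have h2 := D_le k (le_trans hi hk)
      have h3 := D_le i hi
      omega

lemma arc_iff (i j : ℕ) (hi : 1 ≤ i) :
    JacoArc 1 0 i j ↔ i < j ∧ j ≤ 2 * i - jacoIndeg 1 0 i := by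
  have h := D_le i hi
  simp only [JacoArc]
  constructor
  · rintro ⟨_, h1, h2⟩; omega
  · rintro ⟨h1, h2⟩; omega

lemma outdegInf_eq (i : ℕ) (hi : 1 ≤ i) :
    jacoOutdegInf 1 0 i = i - jacoIndeg 1 0 i := by
  have h := D_le i hi
  have hset : {j | JacoArc 1 0 i j} = ↑(Finset.Ioc i (2 * i - jacoIndeg 1 0 i)) := by
    ext j
    simp [arc_iff i j hi, Finset.mem_Ioc]
  rw [jacoOutdegInf, hset, Set.ncard_coe_finset, Nat.card_Ioc]
  omega

lemma key : ∀ i : ℕ, 1 ≤ i → jseq 1 i = i - jacoIndeg 1 0 i := by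
  intro i
  induction i using Nat.strongRecOn with
  | ind n IH =>
    intro hn
    rcases eq_or_lt_of_le hn with h1 | h2
    · -- n = 1
      have hD : jacoIndeg 1 0 1 = 0 := by
        rw [D_eq]; simp
      rw [← h1, jseq_eq]; simp [hD]
    · -- n ≥ 2
      have hn2 : 2 ≤ n := h2
      -- the defining set for jseq
      set S : Set ℕ := {k : ℕ | ∃ _ : k < n, n ≤ 1 * k + jseq 1 k} with hS
      have ha : jseq 1 n = sInf S := by
        rw [jseq_eq]
        have : ¬ n = 0 := by omega
        have : ¬ n = 1 := by omega
        rw [if_neg (by omega : ¬ n = 0), if_neg (by omega : ¬ n = 1)]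
      -- n - 1 ∈ S
      have hmem : n - 1 ∈ S := by
        have h1n : 1 ≤ n - 1 := by omega
        have hDl := D_le (n - 1) h1n
        have := IH (n - 1) (by omega) h1n
        exact ⟨by omega, by omega⟩
      have hMmem : sInf S ∈ S := Nat.sInf_mem ⟨_, hmem⟩
      set M := sInf S with hM
      obtain ⟨hMlt, hMge⟩ := hMmem
      have hM1 : 1 ≤ M := by
        by_contra h
        have hM0 : M = 0 := by omega
        rw [hM0, jseq_eq] at hMge
        simp at hMge
        omega
      have haM := IH M hMlt hM1
      have hDM := D_le M hM1
      -- the filter set equals Ico M n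
      have hfil : (Finset.Ico 1 n).filter (fun i => n + jacoIndeg 1 0 i ≤ 1 * i + 0 + i)
          = Finset.Ico M n := by
        ext i
        simp only [Finset.mem_filter, Finset.mem_Ico]
        constructor
        · rintro ⟨⟨hi1, hi2⟩, hcond⟩
          refine ⟨Nat.sInf_le ⟨hi2, ?_⟩, hi2⟩
          have := IH i hi2 hi1
          have := D_le i hi1
          omega
        · rintro ⟨hMi, hin⟩
          have hi1 : 1 ≤ i := le_trans hM1 hMi
          refine ⟨⟨hi1, hin⟩, ?_⟩
          have hmono := G_mono M i hM1 hMi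
          have hDi := D_le i hi1
          have := IH i hin hi1
          omega
      have hDn : jacoIndeg 1 0 n = n - M := by
        rw [D_eq, hfil, Nat.card_Ico]
      rw [ha, hDn]
      omega

lemma gauss (n : ℕ) : (∑ j ∈ Finset.Icc 1 n, j) * 2 = n * (n + 1) := by
  induction n with
  | zero => simp
  | succ k ih =>
      rw [Finset.sum_Icc_succ_top (by omega : 1 ≤ k + 1)]
      nlinarith [ih]

lemma arcs_eq (n : ℕ) :
    jacoArcs 1 0 n = ∑ j ∈ Finset.Icc 1 n, jacoIndeg 1 0 j := by
  rw [jacoArcs, Finset.card_filter, Finset.sum_product, Finset.sum_comm]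
  apply Finset.sum_congr rfl
  intro j hj
  rw [Finset.mem_Icc] at hj
  rw [← Finset.card_filter]
  have hfil : (Finset.Icc 1 n).filter (fun i => JacoArc 1 0 i j)
      = (Finset.Ico 1 j).filter (fun i => j + jacoIndeg 1 0 i ≤ 1 * i + 0 + i) := by
    ext i
    simp only [Finset.mem_filter, Finset.mem_Icc, Finset.mem_Ico]
    simp only [JacoArc]
    constructor
    · rintro ⟨⟨hi1, hi2⟩, hi3, hi4, hi5⟩
      exact ⟨⟨hi3, hi4⟩, hi5⟩
    · rintro ⟨⟨hi1, hi2⟩, hcond⟩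
      exact ⟨⟨hi1, by omega⟩, hi1, hi2, hcond⟩
  rw [hfil, ← D_eq]


end JacoAux

/-- For `f(x) = x`: `d⁺(v_i) = a_i` and `d⁺(v_i) + d⁻(v_i) = i` in `J_∞(x)`,
and hence `ε(J_n(x)) = n(n+1)/2 - Σ_{i=1}^{n} a_i`. -/
theorem jaco_arcs_via_a (n : ℕ) :
    (∀ i : ℕ, 1 ≤ i → jacoOutdegInf 1 0 i = jseq 1 i ∧
        jacoOutdegInf 1 0 i + jacoIndeg 1 0 i = i) ∧
      jacoArcs 1 0 n = n * (n + 1) / 2 - ∑ i ∈ Finset.Icc 1 n, jseq 1 i := by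
  constructor
  · intro i hi
    have h1 := outdegInf_eq i hi
    have h2 := key i hi
    have h3 := D_le i hi
    exact ⟨by omega, by omega⟩
  · have hsum : ∑ j ∈ Finset.Icc 1 n, jseq 1 j + ∑ j ∈ Finset.Icc 1 n, jacoIndeg 1 0 j
        = ∑ j ∈ Finset.Icc 1 n, j := by
      rw [← Finset.sum_add_distrib]
      apply Finset.sum_congr rfl
      intro j hj
      rw [Finset.mem_Icc] at hj
      have := key j hj.1
      have := D_le j hj.1
      omega
    have hg := gauss n
    have ha := arcs_eq n
    omega
end
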